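/- Let φ : A → B be a morphism of UFDs of characteristic p ≥ 0 which is flat, maps prime elements to prime elements, satisfies B* = φ(A*), and induces a finite separable extension Frac(φ(A)) ⊆ Frac(B) whose degree is not divisible by p. If additionally there exist a ∈ A \ {0} such that the induced map A[1/a] → B[1/φ(a)] is an isomorphism, then φ itself is an isomorphism. -/
import Mathlib


/-- Final step of the UFD isomorphism theorem: let `φ : A → B` be a morphism of UFDs of
characteristic `p` (`p = 0` or prime) which is injective and flat, maps prime elements to
prime elements, satisfies `B* = φ(A*)`, and induces a finite separable extension
`Frac(A) ⊆ Frac(B)` of degree not divisible by `p`. If moreover there is `a ≠ 0` in `A`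
such that the induced map `A[1/a] → B[1/φ(a)]` is an isomorphism, then `φ` is an
isomorphism. -/
theorem stmt_16 (p : ℕ) (hp : p = 0 ∨ p.Prime) (A B : Type*)
    [CommRing A] [IsDomain A] [UniqueFactorizationMonoid A]
    [CommRing B] [IsDomain B] [UniqueFactorizationMonoid B]
    [CharP A p] [CharP B p] [Algebra A B] [Module.Flat A B]
    (hinj : Function.Injective (algebraMap A B))
    (hprimes : ∀ a : A, Prime a → Prime (algebraMap A B a))
    (hunits : ∀ b : B, IsUnit b ↔ ∃ a : A, IsUnit a ∧ algebraMap A B a = b)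
    [NoZeroSMulDivisors A (FractionRing B)]
    (hext : letI : Algebra (FractionRing A) (FractionRing B) :=
        FractionRing.liftAlgebra A (FractionRing B)
      FiniteDimensional (FractionRing A) (FractionRing B) ∧
        Algebra.IsSeparable (FractionRing A) (FractionRing B) ∧
        ¬ p ∣ Module.finrank (FractionRing A) (FractionRing B))
    (a : A) (ha : a ≠ 0)
    (hiso : Function.Bijective
      (IsLocalization.Away.map (Localization.Away a)
        (Localization.Away (algebraMap A B a)) (algebraMap A B) a)) :
    Function.Bijective (algebraMap A B) := by
  refine ⟨hinj, ?_⟩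
  -- Key lemma: any divisor in `B` of an element coming from `A` is itself in the image of `A`.
  have key : ∀ y : A, y ≠ 0 → ∀ b : B, b ∣ algebraMap A B y →
      ∃ x : A, algebraMap A B x = b := by
    intro y
    refine UniqueFactorizationMonoid.induction_on_prime y ?_ ?_ ?_
    · intro h; exact absurd rfl h
    · intro u hu _ b hb
      have hbu : IsUnit b := isUnit_of_dvd_unit hb (hu.map (algebraMap A B))
      obtain ⟨x, _, hx⟩ := (hunits b).mp hbu
      exact ⟨x, hx⟩
    · intro y' q hy' hq IH _ b hb
      have hqB := hprimes q hq
      have hq0 : algebraMap A B q ≠ 0 := hqB.ne_zero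
      rw [map_mul] at hb
      by_cases hd : algebraMap A B q ∣ b
      · obtain ⟨b', rfl⟩ := hd
        have hb' : b' ∣ algebraMap A B y' := by
          have := (mul_dvd_mul_iff_left hq0).mp hb
          exact this
        obtain ⟨x', hx'⟩ := IH hy' b' hb'
        exact ⟨q * x', by rw [map_mul, hx']⟩
      · obtain ⟨c, hc⟩ := hb
        have hqbc : algebraMap A B q ∣ b * c := ⟨algebraMap A B y', hc.symm⟩
        have hqc : algebraMap A B q ∣ c := (hqB.dvd_or_dvd hqbc).resolve_left hd
        obtain ⟨c', rfl⟩ := hqc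
        have heq : algebraMap A B q * algebraMap A B y' =
            algebraMap A B q * (b * c') := by linear_combination hc
        have hbd : b ∣ algebraMap A B y' := ⟨c', mul_left_cancel₀ hq0 heq⟩
        exact IH hy' b hbd
  -- Now prove surjectivity.
  intro b
  by_cases hb0 : b = 0
  · exact ⟨0, by simp [hb0]⟩
  have hφa : algebraMap A B a ≠ 0 := fun h => ha (hinj (by simpa using h))
  obtain ⟨z, hz⟩ := hiso.2 (algebraMap B (Localization.Away (algebraMap A B a)) b)
  obtain ⟨⟨x, s⟩, hxs⟩ := IsLocalization.surj (Submonoid.powers a) z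
  obtain ⟨k, hk⟩ := s.2
  -- apply the map to hxs
  have hmap : ∀ t : A,
      IsLocalization.Away.map (Localization.Away a)
        (Localization.Away (algebraMap A B a)) (algebraMap A B) a
        (algebraMap A (Localization.Away a) t)
      = algebraMap B (Localization.Away (algebraMap A B a)) (algebraMap A B t) := by
    intro t
    exact IsLocalization.map_eq _ t
  have h1 := congrArg (IsLocalization.Away.map (Localization.Away a)
      (Localization.Away (algebraMap A B a)) (algebraMap A B) a) hxs
  rw [map_mul, hz, hmap, hmap] at h1
  -- h1 : algebraMap b * algebraMap (φ s) = algebraMap (φ x)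
  have h2 : algebraMap B (Localization.Away (algebraMap A B a))
      (b * algebraMap A B s.1 - algebraMap A B x) = 0 := by
    rw [map_sub, map_mul, sub_eq_zero, h1]
  rw [IsLocalization.map_eq_zero_iff (Submonoid.powers (algebraMap A B a))] at h2
  obtain ⟨m, hm⟩ := h2
  obtain ⟨n, hn⟩ := m.2
  have hm' : (algebraMap A B a) ^ n * (b * algebraMap A B s.1 - algebraMap A B x) = 0 := by
    rw [← hn] at hm; simpa using hm
  have hsub := sub_eq_zero.mp ((mul_eq_zero.mp hm').resolve_left (pow_ne_zero n hφa))
  have hfin : b * algebraMap A B (a ^ n * s.1) = algebraMap A B (a ^ n * x) := by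
    rw [map_mul, map_mul, map_pow]
    linear_combination ((algebraMap A B a) ^ n) * hsub
  have hdvd : b ∣ algebraMap A B (a ^ n * x) := ⟨_, hfin.symm⟩
  have hs0 : s.1 ≠ 0 := by
    have hks : a ^ k = s.1 := hk
    rw [← hks]
    exact pow_ne_zero k ha
  have hne : a ^ n * x ≠ 0 := by
    intro h
    apply hb0
    have h0 : b * algebraMap A B (a ^ n * s.1) = 0 := by rw [hfin, h, map_zero]
    have hsn : algebraMap A B (a ^ n * s.1) ≠ 0 := fun hh =>
      mul_ne_zero (pow_ne_zero n ha) hs0 (hinj (by simpa using hh))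
    exact (mul_eq_zero.mp h0).resolve_right hsn
  obtain ⟨x', hx'⟩ := key _ hne b hdvd
  exact ⟨x', hx'⟩
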